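/- arXiv:1306.6492 — 7 statements merged into one kernel-verified Lean document; each statement's English description precedes it below -/
import Mathlib

section
/- Let E₁, E₂, Z be Hausdorff topological vector spaces, K ⊆ E₁ and D ⊆ E₂ subsets, and C a convex cone in Z. Let L be a simplex in K × D (the convex hull of a finite affinely independent set) and let L_K = pr_K L be its projection onto K. Let (A, F) : L_K → 2^L be weakly naturally quasi-concave, where (A,F)(x) = A(x) × F(x) with A : L_K → 2^K and F : L_K → 2^D, and suppose that for each n ∈ ℕ, λ ∈ Δ_{n−1} and x₁, …, x_n ∈ L_K one has A(∑_{i=1}^n λ_i x_i) ⊆ ∩_{i=1}^n A(x_i). Let f : L × K → 2^Z be a correspondence such that: (i) for every (x,y) ∈ L, f(x, y, u) ⊆ C for all u ∈ A(x); (ii) for each z ∈ K, each n ∈ ℕ, all λ, λ' ∈ Δ_{n−1} and all (x₁,y₁), …, (x_n,y_n) ∈ L, f(∑_{i=1}^n λ_i x_i, ∑_{i=1}^n λ'_i y_i, z) ⊆ ∩_{i=1}^n f(x_i, y_i, z). Then there exist x* ∈ K and y* ∈ F(x*) such that x* ∈ A(x*) and f(x*, y*, z) ⊆ C for all z ∈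 A(x*); i.e. the solution set V_A(f) is nonempty. -/
open Pointwise Topology Set

/-- A correspondence `T` is *weakly naturally quasi-concave* on `S`: for every finite
family `x 1, …, x n` in `S` there are `y i ∈ T (x i)` and continuous maps
`g i : [0,1] → [0,1]` with `g i 1 = 1`, `g i 0 = 0`, sending the standard simplex into
itself coordinatewise, such that `∑ g i (λ i) • y i ∈ T (∑ λ i • x i)` for every
`λ ∈ Δ_{n-1}`. -/
def WNQOn {E F : Type*} [AddCommGroup E] [Module ℝ E] [AddCommGroup F] [Module ℝ F]
    (T : E → Set F) (S : Set E) : Prop :=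
  ∀ (n : ℕ) (x : Fin n → E), (∀ i, x i ∈ S) →
    ∃ y : Fin n → F, (∀ i, y i ∈ T (x i)) ∧
      ∃ g : Fin n → ℝ → ℝ,
        (∀ i, ContinuousOn (g i) (Icc (0 : ℝ) 1)) ∧
        (∀ i, g i 1 = 1) ∧ (∀ i, g i 0 = 0) ∧
        (∀ lam ∈ stdSimplex ℝ (Fin n), (fun i => g i (lam i)) ∈ stdSimplex ℝ (Fin n)) ∧
        ∀ lam ∈ stdSimplex ℝ (Fin n),
          (∑ i, g i (lam i) • y i) ∈ T (∑ i, lam i • x i)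

lemma additive_on_Icc_eq_linear (H : ℝ → ℝ)
    (hc : ContinuousOn H (Icc 0 1))
    (hadd : ∀ a b : ℝ, 0 ≤ a → 0 ≤ b → a + b ≤ 1 → H (a + b) = H a + H b) :
    ∀ t ∈ Icc (0:ℝ) 1, H t = t * H 1 := by
  have h0 : H 0 = 0 := by
    have := hadd 0 0 le_rfl le_rfl (by norm_num)
    simp only [add_zero] at this; linarith
  have hmul : ∀ (j : ℕ) (u : ℝ), 0 ≤ u → (j : ℝ) * u ≤ 1 → H ((j : ℝ) * u) = j * H u := by
    intro j
    induction j with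
    | zero => intro u hu _; simp [h0]
    | succ j ih =>
      intro u hu hle
      push_cast at hle ⊢
      have hju : (j : ℝ) * u ≤ 1 := by nlinarith [Nat.cast_nonneg (α := ℝ) j]
      have hsum : ((j : ℝ) + 1) * u = (j : ℝ) * u + u := by ring
      rw [hsum, hadd _ _ (mul_nonneg (Nat.cast_nonneg j) hu) hu (by linarith),
        ih u hu hju]
      ring
  -- values at points j/(k+1)
  have hfrac : ∀ (j k : ℕ), j ≤ k + 1 → H ((j : ℝ) / (k + 1)) = ((j : ℝ) / (k + 1)) * H 1 := by
    intro j k hjk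
    have hk : (0:ℝ) < (k:ℝ) + 1 := by positivity
    have hki : (0:ℝ) ≤ ((k:ℝ) + 1)⁻¹ := by positivity
    have h1 : H (((k:ℕ)+1 : ℝ) * ((k:ℝ)+1)⁻¹) = ((k:ℕ)+1 : ℝ) * H (((k:ℝ)+1)⁻¹) := by
      have := hmul (k+1) ((k:ℝ)+1)⁻¹ hki (by push_cast; rw [mul_inv_cancel₀ hk.ne'])
      push_cast at this ⊢; exact this
    rw [mul_inv_cancel₀ (by push_cast at h1 ⊢; exact hk.ne')] at h1
    have hHk : H (((k:ℝ)+1)⁻¹) = H 1 / ((k:ℝ)+1) := by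
      push_cast at h1
      field_simp at h1 ⊢
      linarith
    have hj : (j:ℝ) * ((k:ℝ)+1)⁻¹ ≤ 1 := by
      rw [← le_div_iff₀ (by positivity)] at *
      · simp only [one_div, inv_inv]; exact_mod_cast hjk
    have := hmul j ((k:ℝ)+1)⁻¹ hki hj
    rw [hHk] at this
    rw [div_eq_mul_inv, this]
    ring
  intro t ht
  obtain ⟨ht0, ht1⟩ := ht
  -- approximating sequence
  set u : ℕ → ℝ := fun k => (⌊t * ((k:ℝ) + 1)⌋₊ : ℝ) / ((k:ℝ) + 1) with hu
  have hmemu : ∀ k, u k ∈ Icc (0:ℝ) 1 := by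
    intro k
    have hk : (0:ℝ) < (k:ℝ) + 1 := by positivity
    constructor
    · positivity
    · rw [div_le_one hk]
      calc (⌊t * ((k:ℝ) + 1)⌋₊ : ℝ) ≤ t * ((k:ℝ)+1) := Nat.floor_le (by positivity)
        _ ≤ 1 * ((k:ℝ)+1) := by nlinarith
        _ = (k:ℝ)+1 := one_mul _
  have hval : ∀ k, H (u k) = u k * H 1 := by
    intro k
    apply hfrac
    have : (⌊t * ((k:ℝ) + 1)⌋₊ : ℝ) ≤ ((k:ℝ)+1) := by
      calc (⌊t * ((k:ℝ) + 1)⌋₊ : ℝ) ≤ t * ((k:ℝ)+1) := Nat.floor_le (by positivity)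
        _ ≤ (k:ℝ)+1 := by nlinarith
    exact_mod_cast this
  have htend : Filter.Tendsto u Filter.atTop (nhds t) := by
    rw [← tendsto_sub_nhds_zero_iff]
    refine squeeze_zero_norm (a := fun k : ℕ => 1 / ((k:ℝ)+1)) (fun k => ?_)
      tendsto_one_div_add_atTop_nhds_zero_nat
    have hk : (0:ℝ) < (k:ℝ) + 1 := by positivity
    have h1 : (⌊t * ((k:ℝ) + 1)⌋₊ : ℝ) ≤ t * ((k:ℝ)+1) := Nat.floor_le (by positivity)
    have h2 : t * ((k:ℝ)+1) < ⌊t * ((k:ℝ) + 1)⌋₊ + 1 := Nat.lt_floor_add_one _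
    have e : u k - t = ((⌊t * ((k:ℝ)+1)⌋₊ : ℝ) - t * ((k:ℝ)+1)) / ((k:ℝ)+1) := by
      rw [hu, eq_div_iff hk.ne']
      field_simp
    show ‖u k - t‖ ≤ 1 / ((k:ℝ)+1)
    rw [Real.norm_eq_abs, e, abs_div, abs_of_pos hk]
    have habs : |(⌊t * ((k:ℝ)+1)⌋₊ : ℝ) - t * ((k:ℝ)+1)| ≤ 1 :=
      abs_le.2 ⟨by linarith, by linarith⟩
    gcongr
  have hH1 : Filter.Tendsto (fun k => H (u k)) Filter.atTop (nhds (H t)) :=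
    (hc t ⟨ht0, ht1⟩).tendsto.comp
      (tendsto_nhdsWithin_iff.2 ⟨htend, Filter.Eventually.of_forall hmemu⟩)
  have hH1' : Filter.Tendsto (fun k => u k * H 1) Filter.atTop (nhds (H t)) := by
    simpa only [hval] using hH1
  exact tendsto_nhds_unique hH1' (htend.mul_const (H 1))


lemma wnq_g_eq_id {m : ℕ} (hm : 3 ≤ m) (g : Fin m → ℝ → ℝ)
    (hcont : ∀ i, ContinuousOn (g i) (Icc (0:ℝ) 1))
    (h1 : ∀ i, g i 1 = 1) (h0 : ∀ i, g i 0 = 0)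
    (hsum : ∀ lam ∈ stdSimplex ℝ (Fin m), ∑ i, g i (lam i) = 1) :
    ∀ k : Fin m, ∀ t ∈ Icc (0:ℝ) 1, g k t = t := by
  intro k
  -- pick two other indices
  have hcard : 1 < (Finset.univ.erase k).card := by
    rw [Finset.card_erase_of_mem (Finset.mem_univ k), Finset.card_univ, Fintype.card_fin]
    omega
  obtain ⟨i, hi, j, hj, hij⟩ := Finset.one_lt_card.mp hcard
  have hik : i ≠ k := Finset.ne_of_mem_erase hi
  have hjk : j ≠ k := Finset.ne_of_mem_erase hj
  -- the key three-point identity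
  have key : ∀ a b : ℝ, 0 ≤ a → 0 ≤ b → a + b ≤ 1 →
      g i a + g j b + g k (1 - a - b) = 1 := by
    intro a b ha hb hab
    set lam : Fin m → ℝ := fun l =>
      (if l = i then a else 0) + (if l = j then b else 0) +
        (if l = k then 1 - a - b else 0) with hlam
    have hmem : lam ∈ stdSimplex ℝ (Fin m) := by
      constructor
      · intro l
        have : (0:ℝ) ≤ 1 - a - b := by linarith
        simp only [hlam]
        have h3 : (0:ℝ) ≤ 1 - a - b := by linarith
        split_ifs <;> simp <;> linarith
      · simp only [hlam, Finset.sum_add_distrib, Finset.sum_ite_eq', Finset.mem_univ,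
          if_true]
        ring
    have hval : ∀ l : Fin m, l ≠ i → l ≠ j → l ≠ k → g l (lam l) = 0 := by
      intro l hli hlj hlk
      simp [hlam, hli, hlj, hlk, h0]
    have hsum' := hsum lam hmem
    have hrw : ∑ l, g l (lam l) = g i a + g j b + g k (1 - a - b) := by
      rw [← Finset.sum_subset (Finset.subset_univ ({i, j, k} : Finset (Fin m)))
        (fun l _ hl => by
          simp only [Finset.mem_insert, Finset.mem_singleton, not_or] at hl
          exact hval l hl.1 hl.2.1 hl.2.2)]
      rw [Finset.sum_insert (by simp [hij, hik]), Finset.sum_insert (by simp [hjk]),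
        Finset.sum_singleton]
      have hvi : lam i = a := by simp [hlam, hik, hij]
      have hvj : lam j = b := by simp [hlam, hij.symm, hjk]
      have hvk : lam k = 1 - a - b := by
        simp [hlam, Ne.symm hik, Ne.symm hjk]
      rw [hvi, hvj, hvk]
      ring
    rw [hrw] at hsum'
    exact hsum'
  have e1 : ∀ a : ℝ, 0 ≤ a → a ≤ 1 → g i a + g k (1 - a) = 1 := by
    intro a ha ha1
    have := key a 0 ha le_rfl (by linarith)
    simp only [h0, add_zero, sub_zero] at this
    linarith
  have e2 : ∀ b : ℝ, 0 ≤ b → b ≤ 1 → g j b + g k (1 - b) = 1 := by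
    intro b hb hb1
    have := key 0 b le_rfl hb (by linarith)
    simp only [h0, zero_add, sub_zero] at this
    exact this
  set H : ℝ → ℝ := fun t => g k (1 - t) - 1 with hH
  have hHc : ContinuousOn H (Icc 0 1) := by
    apply ContinuousOn.sub _ continuousOn_const
    apply (hcont k).comp ((continuous_const.sub continuous_id).continuousOn)
    intro t ht
    obtain ⟨ht0, ht1⟩ := ht
    simp only [Pi.sub_apply, id_eq]
    exact ⟨by linarith, by linarith⟩
  have hHadd : ∀ a b : ℝ, 0 ≤ a → 0 ≤ b → a + b ≤ 1 → H (a + b) = H a + H b := by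
    intro a b ha hb hab
    have hk3 := key a b ha hb hab
    have h1a := e1 a ha (by linarith)
    have h2b := e2 b hb (by linarith)
    simp only [hH]
    have hs : (1:ℝ) - (a + b) = 1 - a - b := by ring
    rw [hs]
    linarith
  have hH1 : H 1 = -1 := by simp [hH, h0]
  intro t ht
  have h := additive_on_Icc_eq_linear H hHc hHadd (1 - t)
    ⟨by linarith [ht.2], by linarith [ht.1]⟩
  rw [hH1] at h
  simp only [hH, sub_sub_cancel] at h
  linarith


open Filter in
lemma stochastic_exists_fixed {m : ℕ} (hm : 0 < m) (M : Fin m → Fin m → ℝ)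
    (hM : ∀ i, M i ∈ stdSimplex ℝ (Fin m)) :
    ∃ lam ∈ stdSimplex ℝ (Fin m), ∀ j, ∑ i, lam i * M i j = lam j := by
  classical
  set T : (Fin m → ℝ) → (Fin m → ℝ) := fun x j => ∑ i, x i * M i j with hT
  have hTadd : ∀ x y, T (x + y) = T x + T y := by
    intro x y; funext j
    simp only [hT, Pi.add_apply, add_mul, Finset.sum_add_distrib]
  have hTsmul : ∀ (c : ℝ) x, T (c • x) = c • T x := by
    intro c x; funext j
    simp only [hT, Pi.smul_apply, smul_eq_mul, Finset.mul_sum, mul_assoc]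
  have hTsum : ∀ (N : ℕ) (w : ℕ → Fin m → ℝ),
      T (∑ a ∈ Finset.range N, w a) = ∑ a ∈ Finset.range N, T (w a) := by
    intro N w
    induction N with
    | zero => funext j; simp [hT]
    | succ N ih => rw [Finset.sum_range_succ, hTadd, ih, Finset.sum_range_succ]
  have hTmem : ∀ x ∈ stdSimplex ℝ (Fin m), T x ∈ stdSimplex ℝ (Fin m) := by
    intro x hx
    constructor
    · intro j
      exact Finset.sum_nonneg fun i _ => mul_nonneg (hx.1 i) ((hM i).1 j)
    · rw [Finset.sum_comm]
      calc ∑ i, ∑ j, x i * M i j = ∑ i, x i * ∑ j, M i j := by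
            simp [Finset.mul_sum]
        _ = 1 := by
            simp only [(hM _).2, mul_one]
            exact hx.2
  have hTcont : Continuous T :=
    continuous_pi fun j => continuous_finset_sum _ fun i _ =>
      (continuous_apply i).mul continuous_const
  -- iterates
  set w : ℕ → Fin m → ℝ := fun k => T^[k] (fun _ => (m : ℝ)⁻¹) with hw
  have hw0 : w 0 ∈ stdSimplex ℝ (Fin m) := by
    constructor
    · intro j; simp [hw]
    · simp [hw, Finset.sum_const]
      field_simp
  have hwmem : ∀ k, w k ∈ stdSimplex ℝ (Fin m) := by
    intro k
    induction k with
    | zero => exact hw0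
    | succ k ih =>
      have : w (k + 1) = T (w k) := by
        simp only [hw, Function.iterate_succ_apply']
      rw [this]; exact hTmem _ ih
  have hwsucc : ∀ k, w (k + 1) = T (w k) := fun k => by
    simp only [hw, Function.iterate_succ_apply']
  -- Cesàro averages
  set v : ℕ → Fin m → ℝ := fun k => ((k : ℝ) + 1)⁻¹ • ∑ a ∈ Finset.range (k + 1), w a
    with hv
  have hvmem : ∀ k, v k ∈ stdSimplex ℝ (Fin m) := by
    intro k
    have hk : (0:ℝ) < (k : ℝ) + 1 := by positivity
    rw [hv]
    simp only
    rw [Finset.smul_sum]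
    exact (convex_stdSimplex ℝ (Fin m)).sum_mem
      (fun a _ => by positivity)
      (by simp [Finset.sum_const]; field_simp)
      (fun a _ => hwmem a)
  have hkey : ∀ k, T (v k) = v k + ((k : ℝ) + 1)⁻¹ • (w (k + 1) - w 0) := by
    intro k
    rw [hv]
    simp only
    rw [hTsmul, hTsum]
    have h1 : ∑ a ∈ Finset.range (k + 1), T (w a) =
        ∑ a ∈ Finset.range (k + 1), w a + (w (k + 1) - w 0) := by
      have h2 : ∀ a, T (w a) = w (a + 1) := fun a => (hwsucc a).symm
      simp_rw [h2]
      have h3 := Finset.sum_range_succ w (k + 1)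
      have h4 := Finset.sum_range_succ' w (k + 1)
      rw [h3] at h4
      have h5 : ∑ x ∈ Finset.range (k + 1), w (x + 1) =
          ∑ x ∈ Finset.range (k + 1), w x + w (k + 1) - w 0 := by
        rw [eq_sub_iff_add_eq]; exact h4.symm
      rw [h5]; abel
    rw [h1, smul_add]
  -- bound for elements of the simplex
  have hnorm : ∀ x ∈ stdSimplex ℝ (Fin m), ‖x‖ ≤ 1 := by
    intro x hx
    have := stdSimplex_subset_closedBall hx
    rwa [Metric.mem_closedBall, dist_zero_right] at this
  -- compactness: convergent subsequence of the averages
  obtain ⟨lam, hlammem, φ, hφ, hconv⟩ :=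
    (isCompact_stdSimplex ℝ (Fin m)).tendsto_subseq hvmem
  -- error term tends to zero
  have herr : Tendsto (fun k => ((φ k : ℝ) + 1)⁻¹ • (w (φ k + 1) - w 0)) atTop (𝓝 0) := by
    rw [tendsto_zero_iff_norm_tendsto_zero]
    refine squeeze_zero (f := fun k : ℕ => ‖(((φ k : ℝ)) + 1)⁻¹ • (w (φ k + 1) - w 0)‖)
      (g := fun k : ℕ => ((k : ℝ) + 1)⁻¹ * 2) (fun k => norm_nonneg _) (fun k => ?_) ?_
    · 
      have hle : k ≤ φ k := hφ.le_apply
      have hφk : (k : ℝ) + 1 ≤ (φ k : ℝ) + 1 := by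
        have : (k : ℝ) ≤ (φ k : ℝ) := by exact_mod_cast hle
        linarith
      have hpos : (0:ℝ) < (k : ℝ) + 1 := by positivity
      have hpos' : (0:ℝ) < (φ k : ℝ) + 1 := by positivity
      show ‖(((φ k : ℝ)) + 1)⁻¹ • (w (φ k + 1) - w 0)‖ ≤ ((k : ℝ) + 1)⁻¹ * 2
      rw [norm_smul, Real.norm_eq_abs, abs_of_pos (by positivity)]
      have hb : ‖w (φ k + 1) - w 0‖ ≤ 2 := by
        calc ‖w (φ k + 1) - w 0‖ ≤ ‖w (φ k + 1)‖ + ‖w 0‖ := norm_sub_le _ _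
          _ ≤ 1 + 1 := add_le_add (hnorm _ (hwmem _)) (hnorm _ (hwmem _))
          _ = 2 := by norm_num
      calc ((φ k : ℝ) + 1)⁻¹ * ‖w (φ k + 1) - w 0‖ ≤ ((φ k : ℝ) + 1)⁻¹ * 2 := by
            apply mul_le_mul_of_nonneg_left hb (by positivity)
        _ ≤ ((k : ℝ) + 1)⁻¹ * 2 := by
            apply mul_le_mul_of_nonneg_right _ (by norm_num)
            exact inv_anti₀ hpos hφk
    · have : Tendsto (fun k : ℕ => ((k : ℝ) + 1)⁻¹) atTop (𝓝 0) := by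
        simpa using (tendsto_one_div_add_atTop_nhds_zero_nat :
          Tendsto (fun n : ℕ => 1 / ((n : ℝ) + 1)) atTop (𝓝 0))
      simpa using this.mul_const 2
  have h1 : Tendsto (fun k => T (v (φ k))) atTop (𝓝 (T lam)) :=
    (hTcont.tendsto lam).comp hconv
  have h2 : Tendsto (fun k => T (v (φ k))) atTop (𝓝 (lam + 0)) := by
    have : (fun k => T (v (φ k))) =
        fun k => v (φ k) + ((φ k : ℝ) + 1)⁻¹ • (w (φ k + 1) - w 0) := by
      funext k; exact hkey (φ k)
    rw [this]
    exact hconv.add herr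
  have hfix : T lam = lam := by
    have := tendsto_nhds_unique h1 h2
    simpa using this
  exact ⟨lam, hlammem, fun j => congrFun hfix j⟩


lemma exists_stdSimplex_coords {P : Type*} [AddCommGroup P] [Module ℝ P] {m : ℕ}
    (V : Fin m → P) {z : P} (hz : z ∈ convexHull ℝ (Set.range V)) :
    ∃ μ ∈ stdSimplex ℝ (Fin m), ∑ j, μ j • V j = z := by
  classical
  rw [convexHull_range_eq_exists_affineCombination] at hz
  obtain ⟨s, w, hw0, hw1, hzz⟩ := hz
  refine ⟨fun j => if j ∈ s then w j else 0, ⟨fun j => ?_, ?_⟩, ?_⟩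
  · dsimp only
    split_ifs with h
    exacts [hw0 j h, le_rfl]
  · rw [Finset.sum_ite_mem, Finset.univ_inter]
    exact hw1
  · rw [← hzz, Finset.affineCombination_eq_linear_combination _ _ _ hw1]
    simp_rw [ite_smul, zero_smul]
    rw [Finset.sum_ite_mem, Finset.univ_inter]


/-- Theorem 11: existence of strong solutions for the generalized
strong vector quasi-equilibrium problem under weak natural quasi-concavity. -/
theorem stmt_7 {E₁ E₂ Z : Type*}
    [AddCommGroup E₁] [Module ℝ E₁] [TopologicalSpace E₁] [IsTopologicalAddGroup E₁]
    [ContinuousSMul ℝ E₁] [T2Space E₁]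
    [AddCommGroup E₂] [Module ℝ E₂] [TopologicalSpace E₂] [IsTopologicalAddGroup E₂]
    [ContinuousSMul ℝ E₂] [T2Space E₂]
    [AddCommGroup Z] [Module ℝ Z] [TopologicalSpace Z] [IsTopologicalAddGroup Z]
    [ContinuousSMul ℝ Z] [T2Space Z]
    (K : Set E₁) (D : Set E₂)
    -- `C` is a convex cone in `Z`
    (C : Set Z) (hCcv : Convex ℝ C) (hCcone : ∀ r : ℝ, 0 < r → ∀ c ∈ C, r • c ∈ C)
    -- `L` is a simplex in `K × D`; `L_K` is its projection on `K`
    (n : ℕ) (hn : 0 < n) (v : Fin n → E₁ × E₂) (hv : AffineIndependent ℝ v)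
    (L : Set (E₁ × E₂)) (hL : L = convexHull ℝ (range v)) (hLKD : L ⊆ K ×ˢ D)
    (A : E₁ → Set E₁) (F : E₁ → Set E₂)
    -- `(A, F) : L_K → 2^L` is weakly naturally quasi-concave
    (hAFL : ∀ x ∈ Prod.fst '' L, (A x) ×ˢ (F x) ⊆ L)
    (hWNQ : WNQOn (fun x => (A x) ×ˢ (F x)) (Prod.fst '' L))
    -- `A (∑ λ i • x i) ⊆ ⋂ A (x i)`
    (hAcap : ∀ (m : ℕ) (lam : Fin m → ℝ), lam ∈ stdSimplex ℝ (Fin m) →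
      ∀ x : Fin m → E₁, (∀ i, x i ∈ Prod.fst '' L) →
        A (∑ i, lam i • x i) ⊆ ⋂ i, A (x i))
    (f : E₁ → E₂ → E₁ → Set Z)
    -- (i) `f (x, y, A x) ⊆ C` for `(x, y) ∈ L`
    (hf1 : ∀ p ∈ L, ∀ u ∈ A p.1, f p.1 p.2 u ⊆ C)
    -- (ii) concavity-type condition on `f`
    (hf2 : ∀ z ∈ K, ∀ (m : ℕ) (lam lam' : Fin m → ℝ),
      lam ∈ stdSimplex ℝ (Fin m) → lam' ∈ stdSimplex ℝ (Fin m) →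
      ∀ p : Fin m → E₁ × E₂, (∀ i, p i ∈ L) →
        f (∑ i, lam i • (p i).1) (∑ i, lam' i • (p i).2) z ⊆
          ⋂ i, f (p i).1 (p i).2 z) :
    ∃ x ∈ K, ∃ y ∈ F x, x ∈ A x ∧ ∀ z ∈ A x, f x y z ⊆ C := by
  classical
  set m := n + 2 with hmdef
  have hm3 : 3 ≤ m := by omega
  set τ : Fin m → Fin n := fun j => if h : (j : ℕ) < n then ⟨j, h⟩ else ⟨0, hn⟩ with hτ
  set V : Fin m → E₁ × E₂ := fun j => v (τ j) with hVdef
  have hVL : ∀ j, V j ∈ L := fun j => by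
    rw [hL]; exact subset_convexHull ℝ _ (mem_range_self (τ j))
  set X : Fin m → E₁ := fun j => (V j).1 with hXdef
  have hXL : ∀ j, X j ∈ Prod.fst '' L := fun j => ⟨V j, hVL j, rfl⟩
  obtain ⟨y, hy, g, hgc, hg1, hg0, hgΔ, hkey⟩ := hWNQ m X hXL
  have hgid := wnq_g_eq_id hm3 g hgc hg1 hg0 (fun lam hlam => (hgΔ lam hlam).2)
  have hkey' : ∀ lam ∈ stdSimplex ℝ (Fin m),
      (∑ i, lam i • y i) ∈ (A (∑ i, lam i • X i)) ×ˢ (F (∑ i, lam i • X i)) := by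
    intro lam hlam
    have h := hkey lam hlam
    have e : (∑ i, g i (lam i) • y i) = ∑ i, lam i • y i :=
      Finset.sum_congr rfl fun i _ => by
        rw [hgid i (lam i) (mem_Icc_of_mem_stdSimplex hlam i)]
    rw [e] at h
    exact h
  have hyL : ∀ i, y i ∈ L := fun i => hAFL (X i) (hXL i) (hy i)
  have hrangesub : range v ⊆ range V := by
    rintro _ ⟨i, rfl⟩
    refine ⟨⟨(i : ℕ), by omega⟩, ?_⟩
    simp only [hVdef, hτ]
    rw [dif_pos i.isLt]
  have hyV : ∀ i, y i ∈ convexHull ℝ (range V) := fun i => by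
    have h := hyL i
    rw [hL] at h
    exact convexHull_mono hrangesub h
  choose μ hμmem hμ using fun i => exists_stdSimplex_coords V (hyV i)
  obtain ⟨lam, hlammem, hfix⟩ := stochastic_exists_fixed (by omega) μ hμmem
  set xstar := ∑ i, lam i • X i with hxstar
  have hpmem := hkey' lam hlammem
  have hyfst : ∀ i, (y i).1 = ∑ j, μ i j • X j := by
    intro i
    rw [← hμ i, Prod.fst_sum]
    simp [hXdef]
  have hfst : (∑ i, lam i • y i).1 = xstar := by
    rw [Prod.fst_sum]
    simp only [Prod.smul_fst, smul_eq_mul]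
    calc ∑ i, lam i • (y i).1
        = ∑ i, ∑ j, (lam i * μ i j) • X j := by
          refine Finset.sum_congr rfl fun i _ => ?_
          rw [hyfst i, Finset.smul_sum]
          exact Finset.sum_congr rfl fun j _ => (smul_smul _ _ _)
      _ = ∑ j, (∑ i, lam i * μ i j) • X j := by
          rw [Finset.sum_comm]
          exact Finset.sum_congr rfl fun j _ => (Finset.sum_smul).symm
      _ = ∑ j, lam j • X j :=
          Finset.sum_congr rfl fun j _ => by rw [hfix j]
      _ = xstar := rfl
  set ystar := (∑ i, lam i • y i).2 with hystar
  have hpair : (∑ i, lam i • y i) = (xstar, ystar) := Prod.ext hfst rfl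
  rw [hpair] at hpmem
  obtain ⟨hxA, hyF⟩ := hpmem
  have hsumVL : (∑ i, lam i • V i) ∈ L := by
    rw [hL]
    exact (convex_convexHull ℝ _).sum_mem (fun i _ => hlammem.1 i) hlammem.2
      (fun i _ => subset_convexHull ℝ _ (mem_range_self (τ i)))
  have hxpr : xstar ∈ Prod.fst '' L := by
    refine ⟨∑ i, lam i • V i, hsumVL, ?_⟩
    rw [Prod.fst_sum]
    simp [hXdef, hxstar]
  have hxyL : (xstar, ystar) ∈ L := hAFL xstar hxpr ⟨hxA, hyF⟩
  have hxK : xstar ∈ K := (hLKD hxyL).1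
  exact ⟨xstar, hxK, ystar, hyF, hxA, fun z hz => hf1 (xstar, ystar) hxyL z hz⟩
end

section
/- Let E₁, E₂, Z be Hausdorff topological vector spaces, K ⊆ E₁ and D ⊆ E₂ subsets, and C a convex cone in Z. Let B be the biconvex hull of a finite set {(a₁,b₁), …, (a_n,b_n)} ⊆ K × D and write B_K = pr_K B. Let A : B_K → 2^K and F : B_K → 2^D be correspondences with weakly convex graphs whose product (A,F)(x) = A(x) × F(x) maps B_K into 2^B, and suppose that for each n ∈ ℕ, λ ∈ Δ_{n−1} and x₁, …, x_n ∈ B_K one has A(∑_{i=1}^n λ_i x_i) ⊆ ∩_{i=1}^n A(x_i). Let f : B × K → 2^Z satisfy: (a) for every (x,y) ∈ B, f(x, y, u) ⊆ C for all u ∈ A(x); (b) for each z ∈ K, each n ∈ ℕ, each λ ∈ Δ_{n−1} and all (x₁,y₁), …, (x_n,y_n) ∈ B, f(∑_{i=1}^n λ_i x_i, ∑_{i=1}^n λ_i y_i, z) ⊆ ∩_{i=1}^n f(x_i, y_i, z). Then there exist x* ∈ K and y* ∈ F(x*) such that x* ∈ A(x*) and f(x*, y*, z) ⊆ C for all z ∈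 A(x*); i.e. V_A(f) is nonempty. -/
open Pointwise Topology Set

/-- A set `B ⊆ E₁ × E₂` is *biconvex* if all of its sections are convex. -/
def IsBiconvex {E₁ E₂ : Type*} [AddCommGroup E₁] [Module ℝ E₁]
    [AddCommGroup E₂] [Module ℝ E₂] (B : Set (E₁ × E₂)) : Prop :=
  (∀ x : E₁, Convex ℝ {y : E₂ | (x, y) ∈ B}) ∧
  (∀ y : E₂, Convex ℝ {x : E₁ | (x, y) ∈ B})

/-- The *biconvex hull* of a set: the intersection of all biconvex sets containing it. -/
def biconvexHull {E₁ E₂ : Type*} [AddCommGroup E₁] [Module ℝ E₁]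
    [AddCommGroup E₂] [Module ℝ E₂] (P : Set (E₁ × E₂)) : Set (E₁ × E₂) :=
  ⋂₀ {B : Set (E₁ × E₂) | P ⊆ B ∧ IsBiconvex B}

/-- A correspondence `T` has a *weakly convex graph* on `S`: for each finite family
`x 1, …, x n` in `S` there are `y i ∈ T (x i)` with
`∑ λ i • y i ∈ T (∑ λ i • x i)` for every `λ` in the standard simplex. -/
def WeaklyConvexGraphOn {E F : Type*} [AddCommGroup E] [Module ℝ E]
    [AddCommGroup F] [Module ℝ F] (T : E → Set F) (S : Set E) : Prop :=
  ∀ (n : ℕ) (x : Fin n → E), (∀ i, x i ∈ S) →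
    ∃ y : Fin n → F, (∀ i, y i ∈ T (x i)) ∧
      ∀ lam ∈ stdSimplex ℝ (Fin n), (∑ i, lam i • y i) ∈ T (∑ i, lam i • x i)

open Filter in
/-- Every row-stochastic matrix has a stationary probability vector (proved via Cesàro
averages and compactness of the standard simplex, avoiding Brouwer). -/
lemma aux_stochastic_fixed_point (n : ℕ) (hn : 0 < n) (M : Fin n → Fin n → ℝ)
    (hM : ∀ i, M i ∈ stdSimplex ℝ (Fin n)) :
    ∃ lam ∈ stdSimplex ℝ (Fin n), ∀ j, ∑ i, lam i * M i j = lam j := by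
  -- the linear map `T x = x ᵀ* M`
  set T : (Fin n → ℝ) →ₗ[ℝ] (Fin n → ℝ) :=
    { toFun := fun x j => ∑ i, x i * M i j
      map_add' := by
        intro x y; funext j
        simp [add_mul, Finset.sum_add_distrib]
      map_smul' := by
        intro r x; funext j
        simp [Finset.mul_sum, mul_assoc] } with hT
  have hTapp : ∀ x j, T x j = ∑ i, x i * M i j := fun x j => rfl
  have hTmem : ∀ x ∈ stdSimplex ℝ (Fin n), T x ∈ stdSimplex ℝ (Fin n) := by
    intro x hx
    constructor
    · intro j
      rw [hTapp]
      exact Finset.sum_nonneg fun i _ => mul_nonneg (hx.1 i) ((hM i).1 j)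
    · have : ∑ j, T x j = ∑ i, x i * ∑ j, M i j := by
        simp only [hTapp, Finset.mul_sum]
        rw [Finset.sum_comm]
      rw [this]
      simp only [fun i => (hM i).2, mul_one]
      exact hx.2
  have hnorm : ∀ x ∈ stdSimplex ℝ (Fin n), ‖x‖ ≤ 1 := by
    intro x hx
    rw [pi_norm_le_iff_of_nonneg (by norm_num : (0:ℝ) ≤ 1)]
    intro i
    rw [Real.norm_eq_abs, abs_of_nonneg (hx.1 i)]
    calc x i ≤ ∑ j, x j :=
          Finset.single_le_sum (fun j _ => hx.1 j) (Finset.mem_univ i)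
      _ = 1 := hx.2
  -- iterates and Cesàro means
  set lam0 : Fin n → ℝ := fun _ => (n : ℝ)⁻¹ with hlam0
  have hlam0mem : lam0 ∈ stdSimplex ℝ (Fin n) := by
    constructor
    · intro i; positivity
    · simp [hlam0, Finset.sum_const]
      field_simp
  set u : ℕ → Fin n → ℝ := fun k => T^[k] lam0 with hu
  have humem : ∀ k, u k ∈ stdSimplex ℝ (Fin n) := by
    intro k
    induction k with
    | zero => simpa [hu] using hlam0mem
    | succ k ih =>
      have : u (k + 1) = T (u k) := by
        simp [hu, Function.iterate_succ_apply']
      rw [this]; exact hTmem _ ih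
  set s : ℕ → Fin n → ℝ := fun k => ((k : ℝ) + 1)⁻¹ • ∑ i ∈ Finset.range (k + 1), u i
    with hsdef
  have hsmem : ∀ k, s k ∈ stdSimplex ℝ (Fin n) := by
    intro k
    have : s k = ∑ i ∈ Finset.range (k + 1), ((k : ℝ) + 1)⁻¹ • u i := by
      rw [hsdef]; simp [Finset.smul_sum]
    rw [this]
    refine (convex_stdSimplex ℝ (Fin n)).sum_mem (fun i _ => by positivity) ?_
      (fun i _ => humem i)
    rw [Finset.sum_const, Finset.card_range]
    rw [nsmul_eq_mul]; push_cast; exact mul_inv_cancel₀ (by positivity)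
  have hkey : ∀ k, T (s k) - s k = ((k : ℝ) + 1)⁻¹ • (u (k + 1) - u 0) := by
    intro k
    have h1 : T (s k) = ((k : ℝ) + 1)⁻¹ • ∑ i ∈ Finset.range (k + 1), u (i + 1) := by
      rw [hsdef]
      simp only [map_smul, map_sum]
      congr 1
      refine Finset.sum_congr rfl fun i _ => ?_
      simp [hu, Function.iterate_succ_apply']
    rw [h1, hsdef, ← smul_sub, ← Finset.sum_sub_distrib,
      Finset.sum_range_sub (fun i => u i)]
  have htend : Tendsto (fun k => T (s k) - s k) atTop (𝓝 0) := by
    refine squeeze_zero_norm (a := fun k : ℕ => 2 * (1 / ((k : ℝ) + 1))) ?_ ?_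
    · intro k
      rw [hkey k, norm_smul]
      have h2 : ‖u (k + 1) - u 0‖ ≤ 2 := by
        calc ‖u (k + 1) - u 0‖ ≤ ‖u (k + 1)‖ + ‖u 0‖ := norm_sub_le _ _
          _ ≤ 1 + 1 := add_le_add (hnorm _ (humem _)) (hnorm _ (humem _))
          _ = 2 := by norm_num
      have h3 : ‖((k : ℝ) + 1)⁻¹‖ = 1 / ((k : ℝ) + 1) := by
        rw [Real.norm_eq_abs, abs_of_pos (by positivity), one_div]
      rw [h3]
      calc 1 / ((k : ℝ) + 1) * ‖u (k + 1) - u 0‖ ≤ 1 / ((k : ℝ) + 1) * 2 :=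
            mul_le_mul_of_nonneg_left h2 (by positivity)
        _ = 2 * (1 / ((k : ℝ) + 1)) := by ring
    · have := tendsto_one_div_add_atTop_nhds_zero_nat.const_mul (2 : ℝ)
      simpa using this
  obtain ⟨lam, hlammem, φ, hφ, hconv⟩ :=
    (isCompact_stdSimplex ℝ (Fin n)).tendsto_subseq hsmem
  have hTcont : Continuous T := T.continuous_of_finiteDimensional
  have h1 : Tendsto (fun j => T (s (φ j))) atTop (𝓝 (T lam)) :=
    ((hTcont.tendsto lam).comp hconv)
  have h2 : Tendsto (fun j => T (s (φ j)) - s (φ j)) atTop (𝓝 0) :=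
    htend.comp hφ.tendsto_atTop
  have h3 : Tendsto (fun j => s (φ j)) atTop (𝓝 (T lam - 0)) := by
    have := h1.sub h2
    simpa using this
  have hfix : T lam = lam := by
    have := tendsto_nhds_unique h3 hconv
    simpa using this
  exact ⟨lam, hlammem, fun j => congrFun hfix j⟩

/-- Points of the convex hull of a finite range are convex combinations with weights in
the standard simplex. -/
lemma aux_mem_convexHull_range {E : Type*} [AddCommGroup E] [Module ℝ E]
    {n : ℕ} (a : Fin n → E) {x : E} (hx : x ∈ convexHull ℝ (Set.range a)) :
    ∃ μ ∈ stdSimplex ℝ (Fin n), ∑ j, μ j • a j = x := by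
  rw [convexHull_range_eq_exists_affineCombination] at hx
  obtain ⟨s, w, hw0, hw1, hx⟩ := hx
  refine ⟨fun j => if j ∈ s then w j else 0, ⟨?_, ?_⟩, ?_⟩
  · intro j
    by_cases h : j ∈ s <;> simp [h, hw0 j]
  · rw [Finset.sum_ite_mem, Finset.univ_inter]
    exact hw1
  · rw [← hx, s.affineCombination_eq_linear_combination a w hw1]
    simp only [ite_smul, zero_smul]
    rw [Finset.sum_ite_mem, Finset.univ_inter]

/-- Theorem 14: existence of strong solutions for the generalized
strong vector quasi-equilibrium problem on a biconvex hull, for correspondences with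
weakly convex graphs. -/
theorem stmt_8 {E₁ E₂ Z : Type*}
    [AddCommGroup E₁] [Module ℝ E₁] [TopologicalSpace E₁] [IsTopologicalAddGroup E₁]
    [ContinuousSMul ℝ E₁] [T2Space E₁]
    [AddCommGroup E₂] [Module ℝ E₂] [TopologicalSpace E₂] [IsTopologicalAddGroup E₂]
    [ContinuousSMul ℝ E₂] [T2Space E₂]
    [AddCommGroup Z] [Module ℝ Z] [TopologicalSpace Z] [IsTopologicalAddGroup Z]
    [ContinuousSMul ℝ Z] [T2Space Z]
    (K : Set E₁) (D : Set E₂)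
    -- `C` is a convex cone in `Z`
    (C : Set Z) (hCcv : Convex ℝ C) (hCcone : ∀ r : ℝ, 0 < r → ∀ c ∈ C, r • c ∈ C)
    -- `B` is the biconvex hull of a finite subset of `K × D`
    (n : ℕ) (hn : 0 < n) (v : Fin n → E₁ × E₂) (hvKD : ∀ i, v i ∈ K ×ˢ D)
    (B : Set (E₁ × E₂)) (hB : B = biconvexHull (range v)) (hBKD : B ⊆ K ×ˢ D)
    (A : E₁ → Set E₁) (F : E₁ → Set E₂)
    -- `A` and `F` have weakly convex graphs on `B_K`, and `(A, F)` maps `B_K` into `2^B`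
    (hA : WeaklyConvexGraphOn A (Prod.fst '' B))
    (hF : WeaklyConvexGraphOn F (Prod.fst '' B))
    (hAFB : ∀ x ∈ Prod.fst '' B, (A x) ×ˢ (F x) ⊆ B)
    -- `A (∑ λ i • x i) ⊆ ⋂ A (x i)`
    (hAcap : ∀ (m : ℕ) (lam : Fin m → ℝ), lam ∈ stdSimplex ℝ (Fin m) →
      ∀ x : Fin m → E₁, (∀ i, x i ∈ Prod.fst '' B) →
        A (∑ i, lam i • x i) ⊆ ⋂ i, A (x i))
    (f : E₁ → E₂ → E₁ → Set Z)
    -- (a) `f (x, y, A x) ⊆ C` for `(x, y) ∈ B`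
    (hf1 : ∀ p ∈ B, ∀ u ∈ A p.1, f p.1 p.2 u ⊆ C)
    -- (b) concavity-type condition on `f`
    (hf2 : ∀ z ∈ K, ∀ (m : ℕ) (lam : Fin m → ℝ), lam ∈ stdSimplex ℝ (Fin m) →
      ∀ p : Fin m → E₁ × E₂, (∀ i, p i ∈ B) →
        f (∑ i, lam i • (p i).1) (∑ i, lam i • (p i).2) z ⊆
          ⋂ i, f (p i).1 (p i).2 z) :
    ∃ x ∈ K, ∃ y ∈ F x, x ∈ A x ∧ ∀ z ∈ A x, f x y z ⊆ C := by
  -- the generating points belong to `B`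
  have hvB : ∀ i, v i ∈ B := by
    intro i
    rw [hB]
    exact Set.mem_sInter.mpr fun S hS => hS.1 ⟨i, rfl⟩
  have haB : ∀ i, (v i).1 ∈ Prod.fst '' B := fun i => ⟨v i, hvB i, rfl⟩
  -- `B` is contained in a product of convex hulls
  have hBsub : B ⊆ (convexHull ℝ (Set.range fun i => (v i).1)) ×ˢ
      (convexHull ℝ (Set.range fun i => (v i).2)) := by
    rw [hB]
    apply Set.sInter_subset_of_mem
    refine ⟨?_, ?_, ?_⟩
    · rintro p ⟨i, rfl⟩
      exact ⟨subset_convexHull ℝ _ ⟨i, rfl⟩, subset_convexHull ℝ _ ⟨i, rfl⟩⟩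
    · intro x y₁ hy₁ y₂ hy₂ sc tc hsc htc hst
      exact ⟨hy₁.1, (convex_convexHull ℝ _) hy₁.2 hy₂.2 hsc htc hst⟩
    · intro y x₁ hx₁ x₂ hx₂ sc tc hsc htc hst
      exact ⟨(convex_convexHull ℝ _) hx₁.1 hx₂.1 hsc htc hst, hx₁.2⟩
  -- apply weak convexity of the graphs of `A` and `F` at the generating points
  obtain ⟨c, hc1, hc2⟩ := hA n (fun i => (v i).1) haB
  obtain ⟨d, hd1, hd2⟩ := hF n (fun i => (v i).1) haB
  have hcdB : ∀ i, (c i, d i) ∈ B := fun i => hAFB _ (haB i) ⟨hc1 i, hd1 i⟩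
  have hcConv : ∀ i, c i ∈ convexHull ℝ (Set.range fun i => (v i).1) :=
    fun i => (hBsub (hcdB i)).1
  -- express each `c i` as a convex combination of the generators
  choose μ hμmem hμsum using fun i => aux_mem_convexHull_range _ (hcConv i)
  -- stationary vector of the stochastic matrix `μ`
  obtain ⟨lam, hlammem, hfix⟩ := aux_stochastic_fixed_point n hn (fun i j => μ i j) hμmem
  set xs : E₁ := ∑ i, lam i • (v i).1 with hxs
  have hkey : ∑ i, lam i • c i = xs := by
    calc ∑ i, lam i • c i = ∑ i, lam i • ∑ j, μ i j • (v j).1 := by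
          refine Finset.sum_congr rfl fun i _ => ?_
          rw [hμsum i]
      _ = ∑ i, ∑ j, (lam i * μ i j) • (v j).1 := by
          refine Finset.sum_congr rfl fun i _ => ?_
          rw [Finset.smul_sum]
          exact Finset.sum_congr rfl fun j _ => smul_smul _ _ _
      _ = ∑ j, (∑ i, lam i * μ i j) • (v j).1 := by
          rw [Finset.sum_comm]
          exact Finset.sum_congr rfl fun j _ => (Finset.sum_smul).symm
      _ = ∑ j, lam j • (v j).1 := by
          refine Finset.sum_congr rfl fun j _ => ?_
          rw [hfix j]
  have hxsA : xs ∈ A xs := by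
    have := hc2 lam hlammem
    rwa [hkey] at this
  set ys : E₂ := ∑ i, lam i • d i with hys
  have hysF : ys ∈ F xs := hd2 lam hlammem
  -- `xs` lies in `B_K`
  have i0 : Fin n := ⟨0, hn⟩
  have hxsa0 : xs ∈ A ((v i0).1) := by
    have hsub := hAcap n lam hlammem (fun i => (v i).1) haB
    exact Set.mem_iInter.mp (hsub hxsA) i0
  have hxsB : (xs, d i0) ∈ B := hAFB _ (haB i0) ⟨hxsa0, hd1 i0⟩
  have hxsBK : xs ∈ Prod.fst '' B := ⟨_, hxsB, rfl⟩
  have hxsK : xs ∈ K := (hBKD hxsB).1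
  have hxyB : (xs, ys) ∈ B := hAFB xs hxsBK ⟨hxsA, hysF⟩
  exact ⟨xs, hxsK, ys, hysF, hxsA, fun z hz => hf1 _ hxyB z hz⟩
end

section
/- Let X be a nonempty convex subset of a topological vector space, Z a topological vector space, C a pointed closed convex cone in Z, and W ⊆ Z a set satisfying W + C ⊆ W (e.g. W = C or W = int C). If g : X → 2^Z is a correspondence with nonempty values that is properly C-quasiconvex, then the set {u ∈ X : g(u) ⊄ W} is convex. -/
open Pointwise Set

/-- for a properly `C`-quasiconvex correspondence `g` with nonempty
values, the set `{u ∈ X : g u ⊄ W}` is convex whenever `W + C ⊆ W`. -/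
theorem stmt_10 {E Z : Type*}
    [AddCommGroup E] [Module ℝ E] [TopologicalSpace E] [IsTopologicalAddGroup E]
    [ContinuousSMul ℝ E]
    [AddCommGroup Z] [Module ℝ Z] [TopologicalSpace Z] [IsTopologicalAddGroup Z]
    [ContinuousSMul ℝ Z]
    (X : Set E) (hXne : X.Nonempty) (hXcv : Convex ℝ X)
    -- `C` is a pointed closed convex cone in `Z`
    (C : Set Z) (hCcl : IsClosed C) (hCcv : Convex ℝ C)
    (hCcone : ∀ r : ℝ, 0 < r → ∀ c ∈ C, r • c ∈ C)
    (hCpointed : C ∩ (-C) ⊆ {0})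
    (W : Set Z) (hW : W + C ⊆ W)
    (g : E → Set Z) (hgne : ∀ u ∈ X, (g u).Nonempty)
    -- `g` is properly `C`-quasiconvex on `X`
    (hgqc : ∀ u₁ ∈ X, ∀ u₂ ∈ X, ∀ t ∈ Icc (0 : ℝ) 1,
      g u₁ ⊆ g (t • u₁ + (1 - t) • u₂) + C ∨
      g u₂ ⊆ g (t • u₁ + (1 - t) • u₂) + C) :
    Convex ℝ {u : E | u ∈ X ∧ ¬ g u ⊆ W} := by
  intro u₁ hu₁ u₂ hu₂ a b ha hb hab
  have hX : a • u₁ + b • u₂ ∈ X := hXcv hu₁.1 hu₂.1 ha hb hab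
  refine ⟨hX, ?_⟩
  have hb' : b = 1 - a := by linarith
  have key := hgqc u₁ hu₁.1 u₂ hu₂.1 a ⟨ha, by linarith⟩
  rw [← hb'] at key
  have main : ∀ u : E, u ∈ X → ¬ g u ⊆ W →
      g u ⊆ g (a • u₁ + b • u₂) + C → ¬ g (a • u₁ + b • u₂) ⊆ W := by
    intro u _ hnW hsub hW'
    apply hnW
    intro z hz
    obtain ⟨y, hy, c, hc, rfl⟩ := hsub hz
    exact hW ⟨y, hW' hy, c, hc, rfl⟩
  rcases key with h | h
  · exact main u₁ hu₁.1 hu₁.2 h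
  · exact main u₂ hu₂.1 hu₂.2 h
end

section
/- Let W be a topological space, Z a topological vector space, and C a closed convex cone in Z. If g : W → 2^Z is a correspondence with nonempty values that is lower (−C)-continuous at every point of W, then the set {w ∈ W : g(w) ⊆ C} is closed in W (equivalently, {w ∈ W : g(w) ⊄ C} is open). -/
open Pointwise Set Topology

/-- if `g` is lower `(-C)`-continuous at every point, then
`{w : g w ⊆ C}` is closed. -/
theorem stmt_11 {W Z : Type*} [TopologicalSpace W]
    [AddCommGroup Z] [Module ℝ Z] [TopologicalSpace Z] [IsTopologicalAddGroup Z]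
    [ContinuousSMul ℝ Z]
    -- `C` is a closed convex cone in `Z`
    (C : Set Z) (hCcl : IsClosed C) (hCcv : Convex ℝ C)
    (hCcone : ∀ r : ℝ, 0 < r → ∀ c ∈ C, r • c ∈ C)
    (g : W → Set Z) (hgne : ∀ w, (g w).Nonempty)
    -- `g` is lower `(-C)`-continuous at every point of `W`
    (hglc : ∀ w₀ : W, ∀ U ∈ nhds (0 : Z), ∃ V ∈ nhds w₀,
      ∀ w ∈ V, g w₀ ⊆ g w + U + C) :
    IsClosed {w : W | g w ⊆ C} := by
  have hCC : ∀ c₁ ∈ C, ∀ c₂ ∈ C, c₁ + c₂ ∈ C := by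
    intro c₁ h₁ c₂ h₂
    have h := hCcv h₁ h₂ (by norm_num : (0:ℝ) ≤ 1/2) (by norm_num : (0:ℝ) ≤ 1/2)
      (by norm_num)
    have h2 := hCcone 2 (by norm_num) _ h
    rw [smul_add, smul_smul, smul_smul] at h2
    norm_num at h2
    exact h2
  apply isClosed_of_closure_subset
  intro w₀ hw₀
  intro z hz
  show z ∈ C
  rw [← hCcl.closure_eq, mem_closure_iff_nhds]
  intro t ht
  -- M : neighborhood of 0 with z + M ⊆ t
  have hM : ((fun u : Z => z + u) ⁻¹' t) ∈ nhds (0 : Z) := by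
    have hc : Continuous (fun u : Z => z + u) := continuous_const.add continuous_id
    have := hc.continuousAt (x := (0 : Z))
    apply this
    simpa using ht
  have hU : ((fun u : Z => -u) ⁻¹' ((fun u : Z => z + u) ⁻¹' t)) ∈ nhds (0 : Z) := by
    have hc : Continuous (fun u : Z => -u) := continuous_neg
    have := hc.continuousAt (x := (0 : Z))
    apply this
    simpa using hM
  obtain ⟨V, hV, hVsub⟩ := hglc w₀ _ hU
  obtain ⟨w, hwV, hwS⟩ := (mem_closure_iff_nhds.mp hw₀ V hV)
  have hzmem := hVsub w hwV hz
  obtain ⟨au, hau, c, hc, hz'⟩ := hzmem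
  obtain ⟨a, ha, u, hu, hau'⟩ := hau
  have haC : a ∈ C := hwS ha
  have hacC : a + c ∈ C := hCC a haC c hc
  refine ⟨a + c, ?_, hacC⟩
  have : -u ∈ (fun u : Z => z + u) ⁻¹' t := hu
  have hz'' : z + -u = a + c := by
    subst hau'
    have h3 : a + u + c = z := by simpa using hz'
    rw [← h3]; abel
  rw [← hz'']
  exact hu
end

section
/- Let X be a topological space, Y a nonempty subset of a locally convex topological vector space E, and T : X → 2^Y a correspondence. Let ß be a basis of neighborhoods of 0 in E consisting of open absolutely convex symmetric sets, and let D be a compact subset of Y. For each V ∈ ß define T^V : X → 2^Y by T^V(x) = (T(x) + V) ∩ D. Then ∩_{V ∈ ß} \bar{T^V}(x) ⊆ \bar T(x) for every x ∈ X. -/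
open Pointwise Set Topology

/-- The correspondence `\bar T`: `y ∈ \bar T x` iff `(x, y)` lies in the closure of the
graph of `T` in `X × E`. -/
def GraphCl' {X E : Type*} [TopologicalSpace X] [TopologicalSpace E]
    (T : X → Set E) (x : X) : Set E :=
  {y : E | (x, y) ∈ closure {p : X × E | p.2 ∈ T p.1}}

/-- Lemma 2: `⋂_{V ∈ Bas} \bar{T^V}(x) ⊆ \bar T(x)`, where
`T^V(x) = (T(x) + V) ∩ D`. -/
theorem stmt_13 {X E : Type*} [TopologicalSpace X]
    [AddCommGroup E] [Module ℝ E] [TopologicalSpace E] [IsTopologicalAddGroup E]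
    [ContinuousSMul ℝ E] [LocallyConvexSpace ℝ E]
    (Y : Set E) (hYne : Y.Nonempty)
    (T : X → Set E) (hTY : ∀ x, T x ⊆ Y)
    -- `Bas` is a basis of neighbourhoods of `0` consisting of open absolutely convex
    -- symmetric sets
    (Bas : Set (Set E)) (hbasis : (nhds (0 : E)).HasBasis (· ∈ Bas) id)
    (hBas : ∀ V ∈ Bas, IsOpen V ∧ Convex ℝ V ∧ Balanced ℝ V ∧ V = -V)
    (D : Set E) (hDY : D ⊆ Y) (hDcp : IsCompact D)
    (x : X) :
    (⋂ V ∈ Bas, GraphCl' (fun z => (T z + V) ∩ D) x) ⊆ GraphCl' T x := by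
  intro y hy
  simp only [mem_iInter] at hy
  rw [GraphCl', mem_setOf_eq, mem_closure_iff_nhds]
  intro N hN
  rw [nhds_prod_eq, Filter.mem_prod_iff] at hN
  obtain ⟨U, hU, W, hW, hUW⟩ := hN
  -- translate W to a neighbourhood of 0
  have hW0 : (-y) +ᵥ W ∈ 𝓝 (0 : E) := by
    have := vadd_mem_nhds_vadd (-y) hW
    simpa using this
  obtain ⟨V, hVB, hVsub⟩ := hbasis.mem_iff.1 hW0
  have hVnhds : V ∈ 𝓝 (0 : E) := hbasis.mem_of_mem hVB
  obtain ⟨V1, hV1, hV1half⟩ := exists_nhds_zero_half hVnhds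
  obtain ⟨V', hV'B, hV'sub⟩ := hbasis.mem_iff.1 hV1
  have hV'nhds : V' ∈ 𝓝 (0 : E) := hbasis.mem_of_mem hV'B
  -- y + V' is a neighbourhood of y
  have hyV' : y +ᵥ V' ∈ 𝓝 y := by
    have := vadd_mem_nhds_vadd y hV'nhds
    simpa using this
  have hycl := hy V' hV'B
  rw [GraphCl', mem_setOf_eq, mem_closure_iff_nhds] at hycl
  obtain ⟨p, hpN, hpG⟩ := hycl (U ×ˢ (y +ᵥ V'))
    (by rw [nhds_prod_eq]; exact Filter.prod_mem_prod hU hyV')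
  obtain ⟨hpU, hpW⟩ := hpN
  obtain ⟨hpT, -⟩ := hpG
  obtain ⟨t, ht, v', hv', hsum⟩ := hpT
  obtain ⟨u, hu, huy⟩ := hpW
  -- p.2 = y + u = t + v', so t = y + (u - v')
  refine ⟨(p.1, t), hUW ⟨hpU, ?_⟩, ht⟩
  have hsym : V' = -V' := (hBas V' hV'B).2.2.2
  have hnegv' : -v' ∈ V' := by rw [hsym]; exact neg_mem_neg.2 hv'
  have hmem : u + (-v') ∈ V := hV1half u (hV'sub hu) (-v') (hV'sub hnegv')
  have h : t + v' = y + u := hsum.trans huy.symm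
  have ht2 : t = y + (u + -v') :=
    calc t = (t + v') + -v' := by abel
    _ = (y + u) + -v' := by rw [h]
    _ = y + (u + -v') := by abel
  rw [ht2]
  have := hVsub hmem
  obtain ⟨w, hw, hweq⟩ := this
  simpa [← hweq] using hw
end

section
/- Let E be a Hausdorff topological vector space, let L ⊆ E be a simplex, i.e. the convex hull of a finite affinely independent set {a₁, …, a_n}, and let Y be a convex subset of a topological vector space. If M : L → 2^Y has weakly convex graph, then M admits a continuous selection: there is a continuous map h : L → Y with h(x) ∈ M(x) for every x ∈ L. In particular, one may take h(∑_{i=1}^n λ_i a_i) = ∑_{i=1}^n λ_i c_i, where c_i ∈ M(a_i) are the points provided by the weakly convex graph property and (λ₁,…,λ_n) are the barycentric coordinates on L. -/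
open Set

lemma aux_hull_eq_image {E' : Type*} [AddCommGroup E'] [Module ℝ E'] (n : ℕ) (a : Fin n → E') :
    convexHull ℝ (range a) = (fun lam : Fin n → ℝ => ∑ i, lam i • a i) '' stdSimplex ℝ (Fin n) := by
  ext x
  rw [convexHull_range_eq_exists_affineCombination]
  constructor
  · rintro ⟨s, w, hw0, hw1, rfl⟩
    refine ⟨fun i => if i ∈ s then w i else 0, ⟨fun i => by by_cases h : i ∈ s <;> simp [h, hw0 i], ?_⟩, ?_⟩
    · rw [Finset.sum_ite_mem, Finset.univ_inter, hw1]
    · rw [Finset.affineCombination_eq_linear_combination s a w hw1]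
      simp only [ite_smul, zero_smul]
      rw [Finset.sum_ite_mem, Finset.univ_inter]
  · rintro ⟨lam, ⟨h0, h1⟩, rfl⟩
    exact ⟨Finset.univ, lam, fun i _ => h0 i, h1,
      Finset.affineCombination_eq_linear_combination _ _ _ h1⟩

/-- a correspondence with weakly convex graph on a simplex admits a
continuous selection, which can be taken affine in the barycentric coordinates. -/
theorem stmt_18 {E F : Type*}
    [AddCommGroup E] [Module ℝ E] [TopologicalSpace E] [IsTopologicalAddGroup E]
    [ContinuousSMul ℝ E] [T2Space E]
    [AddCommGroup F] [Module ℝ F] [TopologicalSpace F] [IsTopologicalAddGroup F]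
    [ContinuousSMul ℝ F]
    -- `L` is a simplex: the convex hull of a finite affinely independent set
    (n : ℕ) (hn : 0 < n) (a : Fin n → E) (ha : AffineIndependent ℝ a)
    (L : Set E) (hL : L = convexHull ℝ (range a))
    (Y : Set F) (hYcv : Convex ℝ Y)
    (M : E → Set F) (hMY : ∀ x ∈ L, M x ⊆ Y)
    (hM : WeaklyConvexGraphOn M L) :
    ∃ c : Fin n → F, (∀ i, c i ∈ M (a i)) ∧
      (∀ lam ∈ stdSimplex ℝ (Fin n), (∑ i, lam i • c i) ∈ M (∑ i, lam i • a i)) ∧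
      ∃ h : E → F, ContinuousOn h L ∧ (∀ x ∈ L, h x ∈ M x) ∧
        ∀ lam ∈ stdSimplex ℝ (Fin n), h (∑ i, lam i • a i) = ∑ i, lam i • c i := by
  have haL : ∀ i, a i ∈ L := fun i => hL ▸ subset_convexHull ℝ _ (mem_range_self i)
  obtain ⟨c, hc1, hc2⟩ := hM n a haL
  refine ⟨c, hc1, hc2, ?_⟩
  haveI : CompactSpace (stdSimplex ℝ (Fin n)) :=
    isCompact_iff_compactSpace.mp (isCompact_stdSimplex _ _)
  set g : stdSimplex ℝ (Fin n) → E := fun lam => ∑ i, (lam : Fin n → ℝ) i • a i with hg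
  have hgcont : Continuous g := by
    apply continuous_finset_sum
    intro i _
    exact ((continuous_apply i).comp continuous_subtype_val).smul continuous_const
  have hginj : Function.Injective g := by
    intro l1 l2 hl
    have h1 := l1.2.2
    have h2 := l2.2.2
    apply Subtype.ext
    refine (affineIndependent_iff_eq_of_fintype_affineCombination_eq ℝ a).mp ha _ _ h1 h2 ?_
    rw [Finset.affineCombination_eq_linear_combination _ _ _ h1,
      Finset.affineCombination_eq_linear_combination _ _ _ h2]
    exact hl
  let e : stdSimplex ℝ (Fin n) ≃ range g := Equiv.ofInjective g hginj
  have hecont : Continuous (e : stdSimplex ℝ (Fin n) → range g) :=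
    hgcont.subtype_mk _
  let homeo : stdSimplex ℝ (Fin n) ≃ₜ range g := hecont.homeoOfEquivCompactToT2
  have hLg : L = range g := by
    rw [hL, aux_hull_eq_image, Set.image_eq_range]
    rfl
  classical
  set h : E → F := fun x =>
    if hx : x ∈ range g then ∑ i, ((homeo.symm ⟨x, hx⟩ : Fin n → ℝ) i) • c i else 0 with hh
  have key : ∀ lam : stdSimplex ℝ (Fin n), h (g lam) = ∑ i, (lam : Fin n → ℝ) i • c i := by
    intro lam
    have hx : g lam ∈ range g := mem_range_self _
    have heq : homeo lam = ⟨g lam, hx⟩ := Subtype.ext rfl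
    have : homeo.symm ⟨g lam, hx⟩ = lam := by rw [← heq, Homeomorph.symm_apply_apply]
    simp only [hh, dif_pos hx, this]
  refine ⟨h, ?_, ?_, ?_⟩
  · rw [hLg, continuousOn_iff_continuous_restrict]
    have : (range g).domRestrict h = fun p : range g =>
        ∑ i, ((homeo.symm p : Fin n → ℝ) i) • c i := by
      funext p
      simp only [domRestrict, hh, dif_pos p.2, Subtype.coe_eta]
    rw [this]
    apply continuous_finset_sum
    intro i _
    exact (((continuous_apply i).comp continuous_subtype_val).comp
      homeo.symm.continuous).smul continuous_const
  · intro x hx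
    rw [hLg] at hx
    obtain ⟨lam, rfl⟩ := hx
    rw [key lam]
    exact hc2 _ lam.2
  · intro lam hlam
    exact key ⟨lam, hlam⟩
end

section
/- Let E be a Hausdorff topological vector space and let L ⊆ E be a simplex, i.e. the convex hull of a finite affinely independent set. If M : L → 2^L is a correspondence with weakly convex graph, then M has a fixed point: there exists x* ∈ L with x* ∈ M(x*). -/
open Set

/-- Representation of elements of the convex hull of a finite family as convex combinations. -/
lemma mem_convexHull_range_repr {E : Type*} [AddCommGroup E] [Module ℝ E]
    {n : ℕ} (a : Fin n → E) {x : E} (hx : x ∈ convexHull ℝ (range a)) :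
    ∃ w ∈ stdSimplex ℝ (Fin n), ∑ i, w i • a i = x := by
  rw [convexHull_range_eq_exists_affineCombination] at hx
  obtain ⟨s, w, h0, h1, rfl⟩ := hx
  refine ⟨fun i => if i ∈ s then w i else 0, ⟨fun i => ?_, ?_⟩, ?_⟩
  · by_cases hi : i ∈ s <;> simp [hi, h0 i]
  · rw [Finset.sum_ite_mem, Finset.univ_inter, h1]
  · rw [s.affineCombination_eq_linear_combination a w h1]
    rw [← Finset.sum_subset (Finset.subset_univ s)]
    · exact Finset.sum_congr rfl fun i hi => by simp [hi]
    · intro i _ hi; simp [hi]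

/-- Every linear self-map of the standard simplex has a fixed point (Cesàro averaging). -/
lemma exists_fixed_of_linear_selfmap (n : ℕ) (hn : 0 < n)
    (T : (Fin n → ℝ) →ₗ[ℝ] (Fin n → ℝ))
    (hT : MapsTo T (stdSimplex ℝ (Fin n)) (stdSimplex ℝ (Fin n))) :
    ∃ v ∈ stdSimplex ℝ (Fin n), T v = v := by
  classical
  set v₀ : Fin n → ℝ := fun _ => (n : ℝ)⁻¹ with hv₀def
  have hv₀ : v₀ ∈ stdSimplex ℝ (Fin n) := by
    constructor
    · intro i; positivity
    · simp [hv₀def, Finset.sum_const, Finset.card_univ]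
      field_simp
  set u : ℕ → (Fin n → ℝ) := fun k => (T ^ k) v₀ with hudef
  have hu : ∀ k, u k ∈ stdSimplex ℝ (Fin n) := by
    intro k
    induction k with
    | zero => simpa [hudef] using hv₀
    | succ k ih =>
      have : u (k + 1) = T (u k) := by
        simp [hudef, pow_succ', Module.End.mul_apply]
      rw [this]; exact hT ih
  have huT : ∀ k, T (u k) = u (k + 1) := by
    intro k; simp [hudef, pow_succ', Module.End.mul_apply]
  set s : ℕ → (Fin n → ℝ) := fun N => (N + 1 : ℝ)⁻¹ • ∑ k ∈ Finset.range (N + 1), u k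
    with hsdef
  have hNpos : ∀ N : ℕ, (0 : ℝ) < (N : ℝ) + 1 := fun N => by positivity
  have hs : ∀ N, s N ∈ stdSimplex ℝ (Fin n) := by
    intro N
    have : s N = ∑ k ∈ Finset.range (N + 1), ((N + 1 : ℝ)⁻¹) • u k := by
      simp only [hsdef]
      rw [Finset.smul_sum]
    rw [this]
    refine (convex_stdSimplex ℝ (Fin n)).sum_mem (fun k _ => by positivity) ?_
      (fun k _ => hu k)
    rw [Finset.sum_const, Finset.card_range, nsmul_eq_mul]
    field_simp
    norm_num
  -- norm bound on simplex elements
  have hnorm : ∀ w ∈ stdSimplex ℝ (Fin n), ‖w‖ ≤ 1 := by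
    intro w hw
    rw [pi_norm_le_iff_of_nonneg zero_le_one]
    intro i
    have := mem_Icc_of_mem_stdSimplex hw i
    rw [Real.norm_eq_abs, abs_le]
    exact ⟨le_trans (by norm_num) this.1, this.2⟩
  -- the defect of s N
  have hdefect : ∀ N, T (s N) - s N = (N + 1 : ℝ)⁻¹ • (u (N + 1) - u 0) := by
    intro N
    have h1 : T (s N) = (N + 1 : ℝ)⁻¹ • ∑ k ∈ Finset.range (N + 1), u (k + 1) := by
      simp only [hsdef]
      rw [map_smul, map_sum]
      congr 1
      exact Finset.sum_congr rfl fun k _ => huT k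
    rw [h1]
    simp only [hsdef]
    rw [← smul_sub]
    congr 1
    rw [Finset.sum_range_succ (fun k => u (k + 1)) N, Finset.sum_range_succ' u N]
    abel
  -- compactness: convergent subsequence
  obtain ⟨v, hv, φ, hφ, hconv⟩ :=
    (isCompact_stdSimplex ℝ (Fin n)).tendsto_subseq hs
  refine ⟨v, hv, ?_⟩
  have hTcont : Continuous T := T.continuous_of_finiteDimensional
  have h2 : Filter.Tendsto (fun N => T (s (φ N)) - s (φ N)) Filter.atTop (nhds (T v - v)) :=
    ((hTcont.tendsto v).comp hconv).sub hconv
  have h3 : Filter.Tendsto (fun N => T (s (φ N)) - s (φ N)) Filter.atTop (nhds 0) := by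
    refine squeeze_zero_norm (f := fun N => T (s (φ N)) - s (φ N)) (a := fun N => 2 * ((N : ℝ) + 1)⁻¹) (fun N => ?_) ?_
    · show ‖T (s (φ N)) - s (φ N)‖ ≤ 2 * ((N : ℝ) + 1)⁻¹
      rw [hdefect (φ N), norm_smul]
      have hb : ‖u (φ N + 1) - u 0‖ ≤ 2 := by
        calc ‖u (φ N + 1) - u 0‖ ≤ ‖u (φ N + 1)‖ + ‖u 0‖ := norm_sub_le _ _
          _ ≤ 1 + 1 := add_le_add (hnorm _ (hu _)) (hnorm _ (hu _))
          _ = 2 := by norm_num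
      have hφN : (N : ℝ) + 1 ≤ (φ N : ℝ) + 1 := by
        have := hφ.le_apply (x := N)
        exact_mod_cast add_le_add_left (Nat.cast_le.mpr this) 1
      calc ‖((φ N : ℝ) + 1)⁻¹‖ * ‖u (φ N + 1) - u 0‖
          ≤ ((φ N : ℝ) + 1)⁻¹ * 2 := by
            rw [Real.norm_eq_abs, abs_of_pos (inv_pos.mpr (hNpos (φ N)))]
            exact mul_le_mul_of_nonneg_left hb (le_of_lt (inv_pos.mpr (hNpos (φ N))))
        _ ≤ ((N : ℝ) + 1)⁻¹ * 2 := by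
            gcongr
        _ = 2 * ((N : ℝ) + 1)⁻¹ := by ring
    · have h4 : Filter.Tendsto (fun N : ℕ => ((N : ℝ) + 1)⁻¹) Filter.atTop (nhds 0) := by
        simpa only [one_div] using tendsto_one_div_add_atTop_nhds_zero_nat (𝕜 := ℝ)
      simpa using h4.const_mul 2
  have h5 : T v - v = 0 := tendsto_nhds_unique h2 h3
  exact sub_eq_zero.mp h5

/-- a correspondence of a simplex into itself with weakly convex
graph has a fixed point. -/
theorem stmt_19 {E : Type*}
    [AddCommGroup E] [Module ℝ E] [TopologicalSpace E] [IsTopologicalAddGroup E]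
    [ContinuousSMul ℝ E] [T2Space E]
    -- `L` is a simplex: the convex hull of a finite affinely independent set
    (n : ℕ) (hn : 0 < n) (a : Fin n → E) (ha : AffineIndependent ℝ a)
    (L : Set E) (hL : L = convexHull ℝ (range a))
    (M : E → Set E) (hML : ∀ x ∈ L, M x ⊆ L)
    (hM : WeaklyConvexGraphOn M L) :
    ∃ x ∈ L, x ∈ M x := by
  classical
  have haL : ∀ i, a i ∈ L := fun i => hL ▸ subset_convexHull ℝ _ (mem_range_self i)
  obtain ⟨y, hy, hcomb⟩ := hM n a haL
  have hyL : ∀ i, y i ∈ L := fun i => hML (a i) (haL i) (hy i)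
  -- represent each y i as a convex combination of the vertices
  have hrep : ∀ i, ∃ w ∈ stdSimplex ℝ (Fin n), ∑ j, w j • a j = y i := fun i =>
    mem_convexHull_range_repr a (hL ▸ hyL i)
  choose μ hμ hμy using hrep
  -- the induced linear (stochastic) map on barycentric coordinates
  let T : (Fin n → ℝ) →ₗ[ℝ] (Fin n → ℝ) :=
    { toFun := fun v j => ∑ i, v i * μ i j
      map_add' := fun v w => by
        funext j; simp [add_mul, Finset.sum_add_distrib]
      map_smul' := fun c v => by
        funext j; simp [Finset.mul_sum, mul_assoc] }
  have hT : MapsTo T (stdSimplex ℝ (Fin n)) (stdSimplex ℝ (Fin n)) := by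
    intro v hv
    constructor
    · intro j
      show (0:ℝ) ≤ ∑ i, v i * μ i j
      exact Finset.sum_nonneg fun i _ => mul_nonneg (hv.1 i) ((hμ i).1 j)
    · show ∑ j, ∑ i, v i * μ i j = 1
      rw [Finset.sum_comm]
      calc ∑ i, ∑ j, v i * μ i j = ∑ i, v i * ∑ j, μ i j := by
            simp [Finset.mul_sum]
        _ = ∑ i, v i := by
            refine Finset.sum_congr rfl fun i _ => by rw [(hμ i).2, mul_one]
        _ = 1 := hv.2
  obtain ⟨v, hv, hvfix⟩ := exists_fixed_of_linear_selfmap n hn T hT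
  refine ⟨∑ i, v i • a i, ?_, ?_⟩
  · rw [hL]
    exact (convex_convexHull ℝ (range a)).sum_mem (fun i _ => hv.1 i) hv.2
      fun i _ => subset_convexHull ℝ _ (mem_range_self i)
  · have key : ∑ i, v i • y i = ∑ i, v i • a i := by
      calc ∑ i, v i • y i = ∑ i, v i • ∑ j, μ i j • a j := by
            refine Finset.sum_congr rfl fun i _ => by rw [hμy i]
        _ = ∑ i, ∑ j, (v i * μ i j) • a j := by
            simp [Finset.smul_sum, smul_smul]
        _ = ∑ j, (∑ i, v i * μ i j) • a j := by
            rw [Finset.sum_comm]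
            exact Finset.sum_congr rfl fun j _ => (Finset.sum_smul).symm
        _ = ∑ j, v j • a j := by
            refine Finset.sum_congr rfl fun j _ => ?_
            rw [show (∑ i, v i * μ i j) = v j from congrFun hvfix j]
    have h := hcomb v hv
    rw [key] at h
    exact h
end
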